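/- arXiv:1402.5608 — 2 statements merged into one kernel-verified Lean document; each statement's English description precedes it below -/
import Mathlib

section
/- For all real x, y and λ > 0, the integral ∫_y^∞ φ(λ + (x−z)/(2λ)) e^{−z} z dz equals (2λx − 4λ³) e^{−x} (1 − Φ(λ + (y−x)/(2λ))) + 4λ² e^{−x} φ(λ + (y−x)/(2λ)). -/
open Real MeasureTheory Filter Set Topology

/-- Standard normal density. -/
noncomputable def phi (t : ℝ) : ℝ := (Real.sqrt (2 * Real.pi))⁻¹ * Real.exp (-t ^ 2 / 2)

/-- Standard normal distribution function. -/
noncomputable def Phi (t : ℝ) : ℝ := ∫ s in Set.Iic t, phi s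

lemma phi_nonneg (t : ℝ) : 0 ≤ phi t := by
  unfold phi; positivity

lemma continuous_phi : Continuous phi := by
  unfold phi; fun_prop

lemma integrable_phi : Integrable phi := by
  have h := (integrable_exp_neg_mul_sq (show (0:ℝ) < 1/2 by norm_num)).const_mul
    ((Real.sqrt (2 * Real.pi))⁻¹)
  refine h.congr (Eventually.of_forall fun t => ?_)
  simp only [phi]; ring_nf

lemma integrable_id_mul_phi : Integrable (fun t : ℝ => t * phi t) := by
  have h := (integrable_mul_exp_neg_mul_sq (show (0:ℝ) < 1/2 by norm_num)).const_mul
    ((Real.sqrt (2 * Real.pi))⁻¹)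
  refine h.congr (Eventually.of_forall fun t => ?_)
  simp only [phi]; ring_nf

lemma integral_phi : ∫ t, phi t = 1 := by
  have h : (fun t : ℝ => phi t) = fun t : ℝ =>
      (Real.sqrt (2 * Real.pi))⁻¹ * Real.exp (-(1/2) * t ^ 2) := by
    funext t; simp only [phi]; ring_nf
  rw [show (∫ t, phi t) = ∫ t : ℝ, (Real.sqrt (2 * Real.pi))⁻¹ * Real.exp (-(1/2) * t ^ 2) by
    rw [← h]]
  rw [MeasureTheory.integral_const_mul, integral_gaussian]
  rw [show Real.pi / (1/2) = 2 * Real.pi by ring]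
  rw [inv_mul_cancel₀]
  positivity

lemma hasDerivAt_phi (t : ℝ) : HasDerivAt phi (-t * phi t) t := by
  have h1 : HasDerivAt (fun s : ℝ => -s ^ 2 / 2) (-t) t := by
    have := ((hasDerivAt_pow 2 t).neg).div_const 2
    refine this.congr_deriv ?_
    simp; ring
  have h2 := h1.exp.const_mul ((Real.sqrt (2 * Real.pi))⁻¹)
  refine h2.congr_deriv ?_
  simp only [phi]; ring

lemma hasDerivAt_Phi (t : ℝ) : HasDerivAt Phi (phi t) t := by
  have hrw : Phi = fun u => Phi 0 + ∫ s in (0:ℝ)..u, phi s := by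
    funext u
    have := intervalIntegral.integral_Iic_sub_Iic (μ := volume)
      (integrable_phi.integrableOn) (integrable_phi.integrableOn) (a := (0:ℝ)) (b := u)
    simp only [Phi]
    linarith [this]
  rw [hrw]
  exact (intervalIntegral.integral_hasDerivAt_right
    integrable_phi.intervalIntegrable
    continuous_phi.stronglyMeasurable.stronglyMeasurableAtFilter
    continuous_phi.continuousAt).const_add _

lemma tendsto_phi_atTop : Tendsto phi atTop (𝓝 0) := by
  have h1 : Tendsto (fun t : ℝ => -t ^ 2 / 2) atTop atBot := by
    have h0 : Tendsto (fun t : ℝ => t ^ 2 / 2) atTop atTop :=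
      (tendsto_pow_atTop two_ne_zero).atTop_div_const (by norm_num)
    have := tendsto_neg_atTop_atBot.comp h0
    refine this.congr fun t => by simp [Function.comp]; ring
  have h2 := (Real.tendsto_exp_atBot.comp h1).const_mul ((Real.sqrt (2 * Real.pi))⁻¹)
  refine Tendsto.congr (fun t => ?_) (by simpa using h2)
  simp [phi, Function.comp]

lemma tendsto_Phi_atTop : Tendsto Phi atTop (𝓝 1) := by
  rw [← integral_phi]
  have hrw : Phi = fun t => ∫ s : ℝ, (Set.Iic t).indicator phi s := by
    funext t
    rw [Phi, MeasureTheory.integral_indicator measurableSet_Iic]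
  rw [hrw]
  apply MeasureTheory.tendsto_integral_filter_of_dominated_convergence phi
  · exact Eventually.of_forall fun t =>
      (continuous_phi.aestronglyMeasurable).indicator measurableSet_Iic
  · refine Eventually.of_forall fun t => Eventually.of_forall fun s => ?_
    calc ‖(Set.Iic t).indicator phi s‖ ≤ ‖phi s‖ := norm_indicator_le_norm_self _ _
      _ = phi s := by rw [Real.norm_eq_abs, abs_of_nonneg (phi_nonneg s)]
  · exact integrable_phi
  · refine Eventually.of_forall fun s => ?_
    apply Tendsto.congr' _ tendsto_const_nhds
    filter_upwards [eventually_ge_atTop s] with t ht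
    simp [Set.indicator_of_mem (show s ∈ Set.Iic t from ht)]

theorem stmt1 (x y l : ℝ) (hl : 0 < l) :
    (∫ z in Set.Ioi y, phi (l + (x - z) / (2 * l)) * Real.exp (-z) * z)
      = (2 * l * x - 4 * l ^ 3) * Real.exp (-x) * (1 - Phi (l + (y - x) / (2 * l)))
        + 4 * l ^ 2 * Real.exp (-x) * phi (l + (y - x) / (2 * l)) := by
  have hl2 : (2 * l) ≠ 0 := by positivity
  set c : ℝ → ℝ := fun z => l + (z - x) / (2 * l) with hc_def
  have keyid : ∀ z : ℝ, phi (l + (x - z) / (2 * l)) * Real.exp (-z)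
      = Real.exp (-x) * phi (c z) := by
    intro z
    simp only [phi, hc_def]
    rw [mul_assoc, ← Real.exp_add, mul_comm (Real.exp (-x)), mul_assoc, ← Real.exp_add]
    congr 1
    field_simp
    ring
  have hcd : ∀ z : ℝ, HasDerivAt c (1 / (2 * l)) z := fun z => by
    simpa [hc_def] using (((hasDerivAt_id z).sub_const x).div_const (2 * l)).const_add l
  set F : ℝ → ℝ := fun z =>
    2 * l * Real.exp (-x) * ((x - 2 * l ^ 2) * Phi (c z) - 2 * l * phi (c z)) with hF_def
  have hder : ∀ z : ℝ, HasDerivAt F (phi (l + (x - z) / (2 * l)) * Real.exp (-z) * z) z := by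
    intro z
    have h1 := (hasDerivAt_Phi (c z)).comp z (hcd z)
    have h2 := (hasDerivAt_phi (c z)).comp z (hcd z)
    have h3 := ((h1.const_mul (x - 2 * l ^ 2)).sub (h2.const_mul (2 * l))).const_mul
      (2 * l * Real.exp (-x))
    refine h3.congr_deriv ?_
    symm
    rw [keyid z]
    simp only [Function.comp, hc_def]
    field_simp
    ring
  have hH : Integrable (fun t : ℝ => phi t * (2 * l * t + (x - 2 * l ^ 2))) := by
    have h := (integrable_id_mul_phi.const_mul (2 * l)).add
      (integrable_phi.const_mul (x - 2 * l ^ 2))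
    refine h.congr (Eventually.of_forall fun t => ?_)
    simp only [Pi.add_apply]
    ring
  have hcomp : Integrable (fun z : ℝ => phi (c z) * z) := by
    have h1 := (hH.comp_div hl2).comp_sub_right (x - 2 * l ^ 2)
    refine h1.congr (Eventually.of_forall fun z => ?_)
    dsimp only [hc_def]
    rw [show (z - (x - 2 * l ^ 2)) / (2 * l) = l + (z - x) / (2 * l) by field_simp; ring]
    rw [show 2 * l * (l + (z - x) / (2 * l)) + (x - 2 * l ^ 2) = z by field_simp; ring]
  have hint : IntegrableOn (fun z => phi (l + (x - z) / (2 * l)) * Real.exp (-z) * z)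
      (Set.Ioi y) := by
    have h := ((hcomp.const_mul (Real.exp (-x))).integrableOn (s := Set.Ioi y))
    refine h.congr_fun (fun z _ => ?_) measurableSet_Ioi
    rw [keyid z]
    ring
  have hctop : Tendsto c atTop atTop := by
    apply tendsto_atTop_add_const_left
    apply Tendsto.atTop_div_const (by positivity)
    simpa [sub_eq_add_neg] using tendsto_atTop_add_const_right atTop (-x) tendsto_id
  have htend : Tendsto F atTop
      (𝓝 (2 * l * Real.exp (-x) * ((x - 2 * l ^ 2) * 1 - 2 * l * 0))) := by
    apply Tendsto.const_mul
    exact ((tendsto_Phi_atTop.comp hctop).const_mul _).sub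
      ((tendsto_phi_atTop.comp hctop).const_mul _)
  have hcont : ContinuousWithinAt F (Set.Ici y) y := (hder y).continuousAt.continuousWithinAt
  rw [MeasureTheory.integral_Ioi_of_hasDerivAt_of_tendsto hcont (fun z _ => hder z) hint htend]
  have hcy : c y = l + (y - x) / (2 * l) := rfl
  simp only [hF_def, hcy]
  ring
end

section
/- Let λ_n → λ ∈ (0,∞) with b_n²(λ − λ_n) → α and b_n²(b_n²(λ − λ_n) − α) → β, where b_n → ∞. Set A_{1n} = b_n²(λ − λ_n(1 − λ_n²/b_n²)^{−1/2}). Then b_n²(A_{1n} − α + λ³/2) → β + (3/2)αλ² − (3/8)λ⁵ as n → ∞. -/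
open Filter Real

private theorem keyid (B L S lam α : ℝ) (hS : 0 < S)
    (hrel : B^2 * S^2 = B^2 - L^2) :
    B^2 * (B^2 * (lam - L / S) - α + lam^3/2)
      = B^2 * (B^2 * (lam - L) - α) + B^2 * (lam - L) * (lam^2 + lam*L + L^2)/2
        - L^5 * (S + 2) / (2 * S * (1 + S)^2) := by
  have hS0 : S ≠ 0 := hS.ne'
  have h1S : (1 : ℝ) + S ≠ 0 := by positivity
  field_simp
  linear_combination (2*S*(2*(1+S)^2*B^2*L*S - 2*L*(S+2)*(B^2*S^2-B^2+L^2) + 4*L^3*(S+2)) + ((-8*S^2-6*S+2)*B^2*L + (2-7*S-4*S^2)*L^3)) * hrel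

theorem stmt13 (b l : ℕ → ℝ) (lam α β : ℝ) (hlam : 0 < lam)
    (hlpos : ∀ n, 0 < l n)
    (hb : Filter.Tendsto b Filter.atTop Filter.atTop)
    (hl : Filter.Tendsto l Filter.atTop (nhds lam))
    (hα : Filter.Tendsto (fun n => (b n) ^ 2 * (lam - l n)) Filter.atTop (nhds α))
    (hβ : Filter.Tendsto (fun n => (b n) ^ 2 * ((b n) ^ 2 * (lam - l n) - α))
      Filter.atTop (nhds β)) :
    Filter.Tendsto
      (fun n => (b n) ^ 2 *
        ((b n) ^ 2 * (lam - l n / Real.sqrt (1 - (l n) ^ 2 / (b n) ^ 2)) - α + lam ^ 3 / 2))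
      Filter.atTop (nhds (β + 3 / 2 * α * lam ^ 2 - 3 / 8 * lam ^ 5)) := by
  set s : ℕ → ℝ := fun n => Real.sqrt (1 - (l n) ^ 2 / (b n) ^ 2) with hs_def
  -- b^2 → ∞
  have hb2 : Tendsto (fun n => (b n) ^ 2) atTop atTop := by
    simpa [pow_two] using hb.atTop_mul_atTop₀ hb
  -- (l n)^2 / (b n)^2 → 0
  have ht : Tendsto (fun n => (l n) ^ 2 / (b n) ^ 2) atTop (nhds 0) := by
    have h1 : Tendsto (fun n => ((b n) ^ 2)⁻¹) atTop (nhds 0) := hb2.inv_tendsto_atTop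
    have h2 : Tendsto (fun n => (l n) ^ 2) atTop (nhds (lam ^ 2)) := hl.pow 2
    simpa [div_eq_mul_inv] using h2.mul h1
  -- s → 1
  have hs1 : Tendsto s atTop (nhds 1) := by
    have h1 : Tendsto (fun n => 1 - (l n) ^ 2 / (b n) ^ 2) atTop (nhds 1) := by
      simpa using tendsto_const_nhds.sub ht
    simpa using h1.sqrt
  -- second piece
  have h2nd : Tendsto (fun n => (b n) ^ 2 * (lam - l n) * (lam ^ 2 + lam * l n + (l n) ^ 2) / 2)
      atTop (nhds (α * (lam ^ 2 + lam * lam + lam ^ 2) / 2)) := by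
    exact ((hα.mul (((tendsto_const_nhds.add (tendsto_const_nhds.mul hl)).add (hl.pow 2)))).div_const 2)
  -- third piece
  have h3rd : Tendsto (fun n => (l n) ^ 5 * (s n + 2) / (2 * s n * (1 + s n) ^ 2))
      atTop (nhds (lam ^ 5 * (1 + 2) / (2 * 1 * (1 + 1) ^ 2))) := by
    refine Tendsto.div ((hl.pow 5).mul (hs1.add tendsto_const_nhds))
      (((tendsto_const_nhds.mul hs1)).mul ((tendsto_const_nhds.add hs1).pow 2)) (by norm_num)
  have hG : Tendsto (fun n => (b n) ^ 2 * ((b n) ^ 2 * (lam - l n) - α)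
      + (b n) ^ 2 * (lam - l n) * (lam ^ 2 + lam * l n + (l n) ^ 2) / 2
      - (l n) ^ 5 * (s n + 2) / (2 * s n * (1 + s n) ^ 2)) atTop
      (nhds (β + 3 / 2 * α * lam ^ 2 - 3 / 8 * lam ^ 5)) := by
    have := (hβ.add h2nd).sub h3rd
    convert this using 2
    ring
  -- eventual equality
  refine hG.congr' ?_
  have hev1 : ∀ᶠ n in atTop, lam + 1 ≤ b n := hb.eventually_ge_atTop (lam + 1)
  have hev2 : ∀ᶠ n in atTop, l n < lam + 1 := hl.eventually_lt_const (by linarith)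
  filter_upwards [hev1, hev2] with n h1 h2
  have hln := hlpos n
  have hbpos : (0:ℝ) < b n := by linarith
  have hlt : (l n) ^ 2 < (b n) ^ 2 := by nlinarith
  have htlt : (l n) ^ 2 / (b n) ^ 2 < 1 := by
    rw [div_lt_one (by positivity)]; exact hlt
  have hspos : 0 < s n := Real.sqrt_pos.mpr (by linarith)
  have hs2 : (s n) ^ 2 = 1 - (l n) ^ 2 / (b n) ^ 2 :=
    Real.sq_sqrt (by linarith)
  have hrel : (b n) ^ 2 * (s n) ^ 2 = (b n) ^ 2 - (l n) ^ 2 := by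
    rw [hs2]; field_simp
  exact (keyid (b n) (l n) (s n) lam α hspos hrel).symm
end
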